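/- For every n ≥ 1, the number of permutations of {1,...,n} avoiding the generalized pattern 12-3 and containing exactly two occurrences of the generalized pattern 13-2 equals (n² - 3n - 6)·2^(n-4) + n. -/

import Mathlib

/-- The value of the permutation at position `i` (0-indexed), or 0 if out of range. -/
def permVal {n : ℕ} (π : Equiv.Perm (Fin n)) (i : ℕ) : ℕ :=
  if h : i < n then (π ⟨i, h⟩ : ℕ) else 0

/-- Number of occurrences of the generalized pattern 12-3. -/
def occ12_3 {n : ℕ} (π : Equiv.Perm (Fin n)) : ℕ :=
  ((Finset.range n ×ˢ Finset.range n).filter (fun p =>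
    p.1 + 1 < p.2 ∧ permVal π p.1 < permVal π (p.1 + 1) ∧
      permVal π (p.1 + 1) < permVal π p.2)).card

/-- Number of occurrences of the generalized pattern 13-2. -/
def occ13_2 {n : ℕ} (π : Equiv.Perm (Fin n)) : ℕ :=
  ((Finset.range n ×ˢ Finset.range n).filter (fun p =>
    p.1 + 1 < p.2 ∧ permVal π p.1 < permVal π p.2 ∧
      permVal π p.2 < permVal π (p.1 + 1))).card

/-- Number of occurrences of the generalized pattern 21-3. -/
def occ21_3 {n : ℕ} (π : Equiv.Perm (Fin n)) : ℕ :=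
  ((Finset.range n ×ˢ Finset.range n).filter (fun p =>
    p.1 + 1 < p.2 ∧ permVal π (p.1 + 1) < permVal π p.1 ∧
      permVal π p.1 < permVal π p.2)).card

/-- Number of occurrences of the generalized pattern 23-1. -/
def occ23_1 {n : ℕ} (π : Equiv.Perm (Fin n)) : ℕ :=
  ((Finset.range n ×ˢ Finset.range n).filter (fun p =>
    p.1 + 1 < p.2 ∧ permVal π p.2 < permVal π p.1 ∧
      permVal π p.1 < permVal π (p.1 + 1))).card

/-- Number of occurrences of the generalized pattern 31-2. -/
def occ31_2 {n : ℕ} (π : Equiv.Perm (Fin n)) : ℕ :=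
  ((Finset.range n ×ˢ Finset.range n).filter (fun p =>
    p.1 + 1 < p.2 ∧ permVal π (p.1 + 1) < permVal π p.2 ∧
      permVal π p.2 < permVal π p.1)).card

/-- Number of occurrences of the generalized pattern 32-1. -/
def occ32_1 {n : ℕ} (π : Equiv.Perm (Fin n)) : ℕ :=
  ((Finset.range n ×ˢ Finset.range n).filter (fun p =>
    p.1 + 1 < p.2 ∧ permVal π p.2 < permVal π (p.1 + 1) ∧
      permVal π (p.1 + 1) < permVal π p.1)).card

open Finset Equiv

namespace Stmt2Aux

def ins {n : ℕ} (x : Fin (n+1)) (σ : Perm (Fin n)) : Perm (Fin (n+1)) :=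
  ((finSuccEquiv n).trans (σ.optionCongr)).trans (finSuccEquiv' x).symm

lemma ins_zero {n : ℕ} (x : Fin (n+1)) (σ : Perm (Fin n)) : ins x σ 0 = x := by
  simp [ins, finSuccEquiv_zero]

lemma ins_succ {n : ℕ} (x : Fin (n+1)) (σ : Perm (Fin n)) (i : Fin n) :
    ins x σ i.succ = x.succAbove (σ i) := by
  simp [ins, finSuccEquiv_succ]

lemma ins_bijective (n : ℕ) :
    Function.Bijective (fun p : Fin (n+1) × Perm (Fin n) => ins p.1 p.2) := by
  rw [Fintype.bijective_iff_injective_and_card]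
  constructor
  · rintro ⟨x, σ⟩ ⟨y, τ⟩ h
    simp only at h
    have hx : x = y := by
      have := congrArg (fun π : Perm (Fin (n+1)) => π 0) h
      simpa [ins_zero] using this
    subst hx
    have hσ : σ = τ := by
      ext i
      have := congrArg (fun π : Perm (Fin (n+1)) => π i.succ) h
      simp only [ins_succ] at this
      exact congrArg Fin.val (Fin.succAbove_right_injective this)
    simp [hσ]
  · simp [Fintype.card_perm, Nat.factorial_succ]

/-- the value shift function -/
def emb (x v : ℕ) : ℕ := if v < x then v else v + 1

lemma emb_lt_emb (x : ℕ) {u v : ℕ} : emb x u < emb x v ↔ u < v := by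
  unfold emb; split <;> split <;> omega

lemma lt_emb (x v : ℕ) : x < emb x v ↔ x ≤ v := by unfold emb; split <;> omega

lemma emb_lt (x v : ℕ) : emb x v < x ↔ v < x := by unfold emb; split <;> omega

lemma val_succAbove {n : ℕ} (x : Fin (n+1)) (w : Fin n) :
    (x.succAbove w : ℕ) = emb x.val w.val := by
  rcases lt_or_ge (w.castSucc) x with h | h
  · rw [Fin.succAbove_of_castSucc_lt _ _ h]
    have hv : (w : ℕ) < (x : ℕ) := by simpa [Fin.lt_def] using h
    simp [emb, hv]
  · rw [Fin.succAbove_of_le_castSucc _ _ h]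
    have hv : ¬ ((w : ℕ) < (x : ℕ)) := by
      simp only [Fin.le_def, Fin.coe_castSucc] at h; omega
    simp [emb, hv]

lemma permVal_ins_zero {n : ℕ} (x : Fin (n+1)) (σ : Perm (Fin n)) :
    permVal (ins x σ) 0 = x.val := by
  have : (0 : ℕ) < n + 1 := Nat.succ_pos n
  simp only [permVal, dif_pos this]
  exact congrArg Fin.val (ins_zero x σ)

lemma permVal_ins_succ {n : ℕ} (x : Fin (n+1)) (σ : Perm (Fin n)) {i : ℕ} (hi : i < n) :
    permVal (ins x σ) (i+1) = emb x.val (permVal σ i) := by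
  have h1 : i + 1 < n + 1 := by omega
  simp only [permVal, dif_pos h1, dif_pos hi]
  have : (⟨i+1, h1⟩ : Fin (n+1)) = (⟨i, hi⟩ : Fin n).succ := rfl
  rw [this, ins_succ, val_succAbove]


lemma occ13_2_ins {m : ℕ} (x : Fin (m+2)) (σ : Perm (Fin (m+1))) :
    occ13_2 (ins x σ) = occ13_2 σ +
      ((Finset.range (m+1)).filter fun j => 1 ≤ j ∧ x.val ≤ permVal σ j ∧
        permVal σ j < permVal σ 0).card := by
  classical
  set π := ins x σ with hπ
  set S := (Finset.range (m+2) ×ˢ Finset.range (m+2)).filter (fun p =>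
    p.1 + 1 < p.2 ∧ permVal π p.1 < permVal π p.2 ∧ permVal π p.2 < permVal π (p.1+1)) with hS
  have hsplit : (S.filter (fun p => 1 ≤ p.1)).card + (S.filter (fun p => ¬ 1 ≤ p.1)).card
      = S.card := Finset.card_filter_add_card_filter_not _
  have hocc : occ13_2 π = S.card := rfl
  have hA : (S.filter (fun p => 1 ≤ p.1)).card = occ13_2 σ := by
    apply Finset.card_nbij' (i := fun p => (p.1 - 1, p.2 - 1)) (j := fun q => (q.1 + 1, q.2 + 1))
    · intro p hp
      obtain ⟨p1, p2⟩ := p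
      simp only [Finset.mem_coe, hS, Finset.mem_filter, Finset.mem_product, Finset.mem_range] at hp
      obtain ⟨⟨⟨h1, h2⟩, h3, h4, h5⟩, h6⟩ := hp
      simp only at h3 h4 h5 h6 ⊢
      obtain ⟨i, rfl⟩ : ∃ i, p1 = i + 1 := ⟨p1 - 1, by omega⟩
      obtain ⟨j, rfl⟩ : ∃ j, p2 = j + 1 := ⟨p2 - 1, by omega⟩
      have hi : i < m + 1 := by omega
      have hj : j < m + 1 := by omega
      have hi' : i + 1 < m + 1 := by omega
      rw [permVal_ins_succ x σ hi, permVal_ins_succ x σ hj] at h4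
      rw [permVal_ins_succ x σ hj, permVal_ins_succ x σ hi'] at h5
      simp only [Finset.mem_coe, occ13_2, Finset.mem_filter, Finset.mem_product, Finset.mem_range]
      refine ⟨⟨by omega, by omega⟩, by omega, ?_, ?_⟩
      · simpa using (emb_lt_emb x.val).mp h4
      · have := (emb_lt_emb x.val).mp h5
        simpa using this
    · intro q hq
      simp only [Finset.mem_coe, occ13_2, Finset.mem_filter, Finset.mem_product, Finset.mem_range] at hq
      obtain ⟨⟨h1, h2⟩, h3, h4, h5⟩ := hq
      have hi : q.1 < m + 1 := by omega
      have hi' : q.1 + 1 < m + 1 := by omega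
      have hj : q.2 < m + 1 := by omega
      simp only [Finset.mem_coe, hS, Finset.mem_filter, Finset.mem_product, Finset.mem_range]
      refine ⟨⟨⟨by omega, by omega⟩, by omega, ?_, ?_⟩, by omega⟩
      · rw [permVal_ins_succ x σ hi, permVal_ins_succ x σ hj]
        exact (emb_lt_emb x.val).mpr h4
      · rw [permVal_ins_succ x σ hj]
        have : q.1 + 1 + 1 = (q.1 + 1) + 1 := rfl
        rw [this, permVal_ins_succ x σ hi']
        exact (emb_lt_emb x.val).mpr h5
    · intro p hp
      obtain ⟨p1, p2⟩ := p
      simp only [Finset.mem_coe, hS, Finset.mem_filter] at hp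
      have h1 : 1 ≤ p1 := hp.2
      have h2 : 1 ≤ p2 := by have := hp.1.2.1; omega
      simp only [Prod.mk.injEq]
      omega
    · intro q hq; simp
  have hB : (S.filter (fun p => ¬ 1 ≤ p.1)).card =
      ((Finset.range (m+1)).filter fun j => 1 ≤ j ∧ x.val ≤ permVal σ j ∧
        permVal σ j < permVal σ 0).card := by
    apply Finset.card_nbij' (i := fun p => p.2 - 1) (j := fun j => (0, j + 1))
    · intro p hp
      obtain ⟨p1, p2⟩ := p
      simp only [Finset.mem_coe, hS, Finset.mem_filter, Finset.mem_product, Finset.mem_range] at hp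
      obtain ⟨⟨⟨h1, h2⟩, h3, h4, h5⟩, h6⟩ := hp
      simp only at h3 h4 h5 h6 ⊢
      have hp1 : p1 = 0 := by omega
      rw [hp1] at h3 h4 h5
      obtain ⟨j, hj2⟩ : ∃ j, p2 = j + 1 := ⟨p2 - 1, by omega⟩
      rw [hj2] at h2 h3 h4 h5
      have hj : j < m + 1 := by omega
      have h0 : (0:ℕ) < m + 1 := by omega
      rw [permVal_ins_zero, permVal_ins_succ x σ hj] at h4
      rw [permVal_ins_succ x σ hj, permVal_ins_succ x σ h0] at h5
      simp only [Finset.mem_coe, Finset.mem_filter, Finset.mem_range]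
      refine ⟨by omega, by omega, ?_, ?_⟩
      · rw [hj2]; simpa using (lt_emb x.val _).mp h4
      · rw [hj2]; simpa using (emb_lt_emb x.val).mp h5
    · intro j hj
      simp only [Finset.mem_coe, Finset.mem_filter, Finset.mem_range] at hj
      obtain ⟨h1, h2, h3, h4⟩ := hj
      have hjm : j < m + 1 := h1
      have h0 : (0:ℕ) < m + 1 := by omega
      simp only [Finset.mem_coe, hS, Finset.mem_filter, Finset.mem_product, Finset.mem_range]
      refine ⟨⟨⟨by omega, by omega⟩, by omega, ?_, ?_⟩, by omega⟩
      · rw [permVal_ins_zero, permVal_ins_succ x σ hjm]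
        exact (lt_emb x.val _).mpr h3
      · rw [permVal_ins_succ x σ hjm]
        have : (0:ℕ) + 1 = 0 + 1 := rfl
        rw [permVal_ins_succ x σ h0]
        exact (emb_lt_emb x.val).mpr h4
    · intro p hp
      obtain ⟨p1, p2⟩ := p
      simp only [Finset.mem_coe, hS, Finset.mem_filter] at hp
      have h1 : p1 = 0 := by simpa using hp.2
      have h2 : 1 ≤ p2 := by have := hp.1.2.1; omega
      simp only [Prod.mk.injEq]
      omega
    · intro q hq; simp
  omega


lemma occ12_3_ins {m : ℕ} (x : Fin (m+2)) (σ : Perm (Fin (m+1))) :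
    occ12_3 (ins x σ) = occ12_3 σ +
      ((Finset.range (m+1)).filter fun j => 1 ≤ j ∧ x.val ≤ permVal σ 0 ∧
        permVal σ 0 < permVal σ j).card := by
  classical
  set π := ins x σ with hπ
  set S := (Finset.range (m+2) ×ˢ Finset.range (m+2)).filter (fun p =>
    p.1 + 1 < p.2 ∧ permVal π p.1 < permVal π (p.1+1) ∧ permVal π (p.1+1) < permVal π p.2) with hS
  have hsplit : (S.filter (fun p => 1 ≤ p.1)).card + (S.filter (fun p => ¬ 1 ≤ p.1)).card
      = S.card := Finset.card_filter_add_card_filter_not _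
  have hocc : occ12_3 π = S.card := rfl
  have hA : (S.filter (fun p => 1 ≤ p.1)).card = occ12_3 σ := by
    apply Finset.card_nbij' (i := fun p => (p.1 - 1, p.2 - 1)) (j := fun q => (q.1 + 1, q.2 + 1))
    · intro p hp
      obtain ⟨p1, p2⟩ := p
      simp only [Finset.mem_coe, hS, Finset.mem_filter, Finset.mem_product, Finset.mem_range] at hp
      obtain ⟨⟨⟨h1, h2⟩, h3, h4, h5⟩, h6⟩ := hp
      simp only at h3 h4 h5 h6 ⊢
      obtain ⟨i, rfl⟩ : ∃ i, p1 = i + 1 := ⟨p1 - 1, by omega⟩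
      obtain ⟨j, rfl⟩ : ∃ j, p2 = j + 1 := ⟨p2 - 1, by omega⟩
      have hi : i < m + 1 := by omega
      have hj : j < m + 1 := by omega
      have hi' : i + 1 < m + 1 := by omega
      rw [permVal_ins_succ x σ hi, permVal_ins_succ x σ hi'] at h4
      rw [permVal_ins_succ x σ hi', permVal_ins_succ x σ hj] at h5
      simp only [Finset.mem_coe, occ12_3, Finset.mem_filter, Finset.mem_product, Finset.mem_range]
      refine ⟨⟨by omega, by omega⟩, by omega, ?_, ?_⟩
      · simpa using (emb_lt_emb x.val).mp h4
      · simpa using (emb_lt_emb x.val).mp h5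
    · intro q hq
      simp only [Finset.mem_coe, occ12_3, Finset.mem_filter, Finset.mem_product, Finset.mem_range] at hq
      obtain ⟨⟨h1, h2⟩, h3, h4, h5⟩ := hq
      have hi : q.1 < m + 1 := by omega
      have hi' : q.1 + 1 < m + 1 := by omega
      have hj : q.2 < m + 1 := by omega
      simp only [Finset.mem_coe, hS, Finset.mem_filter, Finset.mem_product, Finset.mem_range]
      refine ⟨⟨⟨by omega, by omega⟩, by omega, ?_, ?_⟩, by omega⟩
      · rw [permVal_ins_succ x σ hi, permVal_ins_succ x σ hi']
        exact (emb_lt_emb x.val).mpr h4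
      · rw [permVal_ins_succ x σ hi', permVal_ins_succ x σ hj]
        exact (emb_lt_emb x.val).mpr h5
    · intro p hp
      obtain ⟨p1, p2⟩ := p
      simp only [Finset.mem_coe, hS, Finset.mem_filter] at hp
      have h1 : 1 ≤ p1 := hp.2
      have h2 : 1 ≤ p2 := by have := hp.1.2.1; omega
      simp only [Prod.mk.injEq]
      omega
    · intro q hq; simp
  have hB : (S.filter (fun p => ¬ 1 ≤ p.1)).card =
      ((Finset.range (m+1)).filter fun j => 1 ≤ j ∧ x.val ≤ permVal σ 0 ∧
        permVal σ 0 < permVal σ j).card := by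
    apply Finset.card_nbij' (i := fun p => p.2 - 1) (j := fun j => (0, j + 1))
    · intro p hp
      obtain ⟨p1, p2⟩ := p
      simp only [Finset.mem_coe, hS, Finset.mem_filter, Finset.mem_product, Finset.mem_range] at hp
      obtain ⟨⟨⟨h1, h2⟩, h3, h4, h5⟩, h6⟩ := hp
      simp only at h3 h4 h5 h6 ⊢
      have hp1 : p1 = 0 := by omega
      rw [hp1] at h3 h4 h5
      obtain ⟨j, hj2⟩ : ∃ j, p2 = j + 1 := ⟨p2 - 1, by omega⟩
      rw [hj2] at h2 h3 h5
      have hj : j < m + 1 := by omega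
      have h0 : (0:ℕ) < m + 1 := by omega
      rw [permVal_ins_zero, permVal_ins_succ x σ h0] at h4
      rw [permVal_ins_succ x σ h0, permVal_ins_succ x σ hj] at h5
      simp only [Finset.mem_coe, Finset.mem_filter, Finset.mem_range]
      refine ⟨by omega, by omega, ?_, ?_⟩
      · simpa using (lt_emb x.val _).mp h4
      · rw [hj2]; simpa using (emb_lt_emb x.val).mp h5
    · intro j hj
      simp only [Finset.mem_coe, Finset.mem_filter, Finset.mem_range] at hj
      obtain ⟨h1, h2, h3, h4⟩ := hj
      have hjm : j < m + 1 := h1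
      have h0 : (0:ℕ) < m + 1 := by omega
      simp only [Finset.mem_coe, hS, Finset.mem_filter, Finset.mem_product, Finset.mem_range]
      refine ⟨⟨⟨by omega, by omega⟩, by omega, ?_, ?_⟩, by omega⟩
      · rw [permVal_ins_zero, permVal_ins_succ x σ h0]
        exact (lt_emb x.val _).mpr h3
      · rw [permVal_ins_succ x σ h0, permVal_ins_succ x σ hjm]
        exact (emb_lt_emb x.val).mpr h4
    · intro p hp
      obtain ⟨p1, p2⟩ := p
      simp only [Finset.mem_coe, hS, Finset.mem_filter] at hp
      have h1 : p1 = 0 := by simpa using hp.2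
      have h2 : 1 ≤ p2 := by have := hp.1.2.1; omega
      simp only [Prod.mk.injEq]
      omega
    · intro q hq; simp
  omega


lemma permVal_lt {m : ℕ} (σ : Perm (Fin m)) {j : ℕ} (h : j < m) :
    permVal σ j = (σ ⟨j, h⟩).val := dif_pos h

lemma max_iff {m : ℕ} (σ : Perm (Fin (m+1))) :
    (∀ j, 1 ≤ j → j < m + 1 → permVal σ j < permVal σ 0) ↔ permVal σ 0 = m := by
  have h0 : (0:ℕ) < m + 1 := Nat.succ_pos m
  constructor
  · intro h
    by_contra hne
    set j0 := (σ.symm (Fin.last m)) with hj0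
    have hval : permVal σ j0.val = m := by
      rw [permVal_lt σ j0.isLt]
      have : (⟨j0.val, j0.isLt⟩ : Fin (m+1)) = j0 := rfl
      rw [this, hj0, Equiv.apply_symm_apply]
      rfl
    have hj0ne : j0.val ≠ 0 := by
      intro hz
      apply hne
      rw [permVal_lt σ h0] at *
      have : (⟨0, h0⟩ : Fin (m+1)) = j0 := by
        ext; simp [hz]
      rw [this, hj0, Equiv.apply_symm_apply]
      rfl
    have := h j0.val (by omega) j0.isLt
    rw [hval] at this
    rw [permVal_lt σ h0] at this
    have : (σ ⟨0, h0⟩).val ≤ m := by omega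
    omega
  · intro h j h1 h2
    rw [permVal_lt σ h2, h]
    have hne : σ ⟨j, h2⟩ ≠ σ ⟨0, h0⟩ := by
      intro heq
      have := σ.injective heq
      simp only [Fin.mk.injEq] at this
      omega
    have : (σ ⟨j, h2⟩).val ≤ m := by omega
    have hne' : (σ ⟨j, h2⟩).val ≠ m := by
      intro hv
      apply hne
      have h0v : permVal σ 0 = (σ ⟨0, h0⟩).val := permVal_lt σ h0
      apply Fin.ext
      rw [hv]
      omega
    omega

lemma count_ge {m : ℕ} (x : Fin (m+2)) (σ : Perm (Fin (m+1))) (hmax : permVal σ 0 = m) :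
    ((Finset.range (m+1)).filter fun j => 1 ≤ j ∧ x.val ≤ permVal σ j ∧
        permVal σ j < permVal σ 0).card = m - x.val := by
  rw [hmax]
  rw [← Nat.card_Ico x.val m]
  apply Finset.card_nbij (i := fun j => permVal σ j)
  · intro j hj
    simp only [Finset.mem_coe, Finset.mem_filter, Finset.mem_range] at hj
    simp only [Finset.mem_coe, Finset.mem_Ico]
    exact ⟨hj.2.2.1, hj.2.2.2⟩
  · intro j1 hj1 j2 hj2 heq
    simp only [Finset.coe_filter, Set.mem_setOf_eq, Finset.mem_range] at hj1 hj2
    simp only at heq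
    rw [permVal_lt σ hj1.1, permVal_lt σ hj2.1] at heq
    have := σ.injective (Fin.ext heq)
    simpa using this
  · intro v hv
    simp only [Finset.coe_Ico, Set.mem_Ico] at hv
    have hv1 : v < m + 1 := by omega
    set j0 := σ.symm ⟨v, hv1⟩ with hj0
    have hval : permVal σ j0.val = v := by
      rw [permVal_lt σ j0.isLt]
      have : (⟨j0.val, j0.isLt⟩ : Fin (m+1)) = j0 := rfl
      rw [this, hj0, Equiv.apply_symm_apply]
    have h0 : (0:ℕ) < m + 1 := Nat.succ_pos m
    have hj0ne : 1 ≤ j0.val := by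
      rcases Nat.eq_zero_or_pos j0.val with hz | hp
      · exfalso
        have : permVal σ 0 = v := by rw [← hz]; exact hval
        omega
      · exact hp
    refine ⟨j0.val, ?_, hval⟩
    simp only [Finset.coe_filter, Set.mem_setOf_eq, Finset.mem_range]
    exact ⟨j0.isLt, hj0ne, by omega, by omega⟩

lemma pred_ins_iff {m : ℕ} (x : Fin (m+2)) (σ : Perm (Fin (m+1))) (k a : ℕ) :
    (occ12_3 (ins x σ) = 0 ∧ occ13_2 (ins x σ) = k ∧ permVal (ins x σ) 0 = a) ↔
    (x.val = a ∧ occ12_3 σ = 0 ∧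
      ((permVal σ 0 < a ∧ occ13_2 σ = k) ∨
       (a ≤ permVal σ 0 ∧ permVal σ 0 = m ∧ a ≤ m ∧ occ13_2 σ + (m - a) = k))) := by
  rw [occ12_3_ins, occ13_2_ins, permVal_ins_zero]
  constructor
  · rintro ⟨h1, h2, rfl⟩
    have h12 : occ12_3 σ = 0 := by omega
    have hE12 : ((Finset.range (m+1)).filter fun j => 1 ≤ j ∧ x.val ≤ permVal σ 0 ∧
        permVal σ 0 < permVal σ j).card = 0 := by omega
    refine ⟨rfl, h12, ?_⟩
    rcases lt_or_ge (permVal σ 0) x.val with hd | ha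
    · left
      refine ⟨hd, ?_⟩
      have hE13 : ((Finset.range (m+1)).filter fun j => 1 ≤ j ∧ x.val ≤ permVal σ j ∧
          permVal σ j < permVal σ 0).card = 0 := by
        rw [Finset.card_eq_zero, Finset.filter_eq_empty_iff]
        intro j _
        intro hc
        omega
      omega
    · right
      have hmax : permVal σ 0 = m := by
        rw [← max_iff σ]
        intro j h1j h2j
        rw [Finset.card_eq_zero, Finset.filter_eq_empty_iff] at hE12
        have := hE12 (Finset.mem_range.mpr h2j)
        simp only [not_and, not_lt] at this
        have hle := this h1j ha
        have hne : permVal σ j ≠ permVal σ 0 := by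
          rw [permVal_lt σ h2j, permVal_lt σ (Nat.succ_pos m)]
          intro heq
          have := σ.injective (Fin.ext heq)
          simp only [Fin.mk.injEq] at this
          omega
        omega
      have hcount := count_ge x σ hmax
      exact ⟨ha, hmax, by omega, by omega⟩
  · rintro ⟨rfl, h12, hbr⟩
    rcases hbr with ⟨hd, hk⟩ | ⟨ha, hmax, ham, hk⟩
    · have hE12 : ((Finset.range (m+1)).filter fun j => 1 ≤ j ∧ x.val ≤ permVal σ 0 ∧
          permVal σ 0 < permVal σ j).card = 0 := by
        rw [Finset.card_eq_zero, Finset.filter_eq_empty_iff]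
        intro j _ hc
        omega
      have hE13 : ((Finset.range (m+1)).filter fun j => 1 ≤ j ∧ x.val ≤ permVal σ j ∧
          permVal σ j < permVal σ 0).card = 0 := by
        rw [Finset.card_eq_zero, Finset.filter_eq_empty_iff]
        intro j _ hc
        omega
      exact ⟨by omega, by omega, rfl⟩
    · have hE12 : ((Finset.range (m+1)).filter fun j => 1 ≤ j ∧ x.val ≤ permVal σ 0 ∧
          permVal σ 0 < permVal σ j).card = 0 := by
        rw [Finset.card_eq_zero, Finset.filter_eq_empty_iff]
        intro j hj hc
        have hjm : j < m + 1 := Finset.mem_range.mp hj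
        have : permVal σ j < m + 1 := by
          rw [permVal_lt σ hjm]
          exact (σ ⟨j, hjm⟩).isLt
        omega
      have hcount := count_ge x σ hmax
      exact ⟨by omega, by omega, rfl⟩


def A (n k a : ℕ) : ℕ :=
  (Finset.univ.filter fun π : Perm (Fin n) =>
    occ12_3 π = 0 ∧ occ13_2 π = k ∧ permVal π 0 = a).card

lemma card_filter_ins (m : ℕ) (P : Perm (Fin (m+2)) → Prop) [DecidablePred P] :
    (Finset.univ.filter P).card =
      (Finset.univ.filter (fun p : Fin (m+2) × Perm (Fin (m+1)) => P (ins p.1 p.2))).card := by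
  symm
  apply Finset.card_nbij (i := fun p => ins p.1 p.2)
  · intro p hp
    simp only [Finset.mem_coe, Finset.mem_filter, Finset.mem_univ, true_and] at hp ⊢
    exact hp
  · intro p1 _ p2 _ heq
    exact (ins_bijective (m+1)).injective heq
  · intro π hπ
    obtain ⟨p, hp⟩ := (ins_bijective (m+1)).surjective π
    refine ⟨p, ?_, hp⟩
    simp only [Finset.coe_filter, Set.mem_setOf_eq, Finset.mem_univ, true_and] at hπ ⊢
    have hp' : ins p.1 p.2 = π := hp
    rw [hp']
    exact hπ

lemma card_filter_pair {m : ℕ} (a : ℕ) (ha : a < m + 2) (Q : Perm (Fin (m+1)) → Prop)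
    [DecidablePred Q] (V : Fin (m+2) × Perm (Fin (m+1)) → Prop) [DecidablePred V]
    (hV : ∀ x σ, V (x, σ) ↔ x.val = a ∧ Q σ) :
    (Finset.univ.filter V).card = (Finset.univ.filter Q).card := by
  apply Finset.card_nbij' (i := fun p => p.2) (j := fun σ => (⟨a, ha⟩, σ))
  · intro p hp
    obtain ⟨p1, p2⟩ := p
    simp only [Finset.mem_coe, Finset.mem_filter, Finset.mem_univ, true_and] at hp ⊢
    exact ((hV p1 p2).mp hp).2
  · intro σ hσ
    simp only [Finset.mem_coe, Finset.mem_filter, Finset.mem_univ, true_and] at hσ ⊢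
    exact (hV _ σ).mpr ⟨rfl, hσ⟩
  · intro p hp
    obtain ⟨p1, p2⟩ := p
    simp only [Finset.mem_coe, Finset.mem_filter, Finset.mem_univ, true_and] at hp
    have h1 : p1.val = a := ((hV p1 p2).mp hp).1
    obtain rfl : p1 = ⟨a, ha⟩ := Fin.ext h1
    rfl
  · intro σ hσ
    rfl

lemma A_rec (m k a : ℕ) (ha : a < m + 2) :
    A (m+2) k a = (∑ a' ∈ Finset.range a, A (m+1) k a') +
      (if a ≤ m ∧ m - a ≤ k then A (m+1) (k - (m - a)) m else 0) := by
  classical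
  rw [A, card_filter_ins m]
  have hcong : (Finset.univ.filter (fun p : Fin (m+2) × Perm (Fin (m+1)) =>
      occ12_3 (ins p.1 p.2) = 0 ∧ occ13_2 (ins p.1 p.2) = k ∧ permVal (ins p.1 p.2) 0 = a)) =
    (Finset.univ.filter (fun p : Fin (m+2) × Perm (Fin (m+1)) =>
      (p.1.val = a ∧ (occ12_3 p.2 = 0 ∧ occ13_2 p.2 = k ∧ permVal p.2 0 < a)) ∨
      (p.1.val = a ∧ (occ12_3 p.2 = 0 ∧ permVal p.2 0 = m ∧ a ≤ m ∧
        occ13_2 p.2 + (m - a) = k)))) := by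
    apply Finset.filter_congr
    intro p _
    rw [pred_ins_iff p.1 p.2 k a]
    constructor
    · rintro ⟨h1, h2, hbr⟩
      rcases hbr with ⟨hd, hk⟩ | ⟨hge, hmax, ham, hk⟩
      · exact Or.inl ⟨h1, h2, hk, hd⟩
      · exact Or.inr ⟨h1, h2, hmax, ham, hk⟩
    · rintro (⟨h1, h2, hk, hd⟩ | ⟨h1, h2, hmax, ham, hk⟩)
      · exact ⟨h1, h2, Or.inl ⟨hd, hk⟩⟩
      · exact ⟨h1, h2, Or.inr ⟨by omega, hmax, ham, hk⟩⟩
  rw [hcong, Finset.filter_or, Finset.card_union_of_disjoint]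
  · congr 1
    · -- descent part
      rw [card_filter_pair a ha
        (fun σ => occ12_3 σ = 0 ∧ occ13_2 σ = k ∧ permVal σ 0 < a) _
        (fun x σ => Iff.rfl)]
      rw [Finset.card_eq_sum_card_fiberwise (f := fun σ => permVal σ 0) (t := Finset.range a)
        (fun σ hσ => by
          simp only [Finset.mem_coe, Finset.mem_filter, Finset.mem_univ, true_and] at hσ
          exact Finset.mem_range.mpr hσ.2.2)]
      apply Finset.sum_congr rfl
      intro a' ha'
      rw [Finset.filter_filter]
      unfold A
      congr 1
      apply Finset.filter_congr
      intro σ _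
      simp only [Finset.mem_range] at ha'
      constructor
      · rintro ⟨⟨h1, h2, _⟩, h4⟩; exact ⟨h1, h2, h4⟩
      · rintro ⟨h1, h2, h3⟩; exact ⟨⟨h1, h2, by omega⟩, h3⟩
    · -- ascent part
      by_cases hc : a ≤ m ∧ m - a ≤ k
      · rw [if_pos hc, card_filter_pair a ha
          (fun σ => occ12_3 σ = 0 ∧ permVal σ 0 = m ∧ a ≤ m ∧ occ13_2 σ + (m - a) = k) _
          (fun x σ => Iff.rfl)]
        unfold A
        congr 1
        apply Finset.filter_congr
        intro σ _
        constructor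
        · rintro ⟨h1, h2, _, h4⟩; exact ⟨h1, by omega, h2⟩
        · rintro ⟨h1, h2, h3⟩; exact ⟨h1, h3, hc.1, by omega⟩
      · rw [if_neg hc]
        rw [Finset.card_eq_zero, Finset.filter_eq_empty_iff]
        rintro p _ ⟨_, _, hmax, ham, hk⟩
        exact hc ⟨ham, by omega⟩
  · -- disjointness
    rw [Finset.disjoint_filter]
    rintro p _ ⟨_, _, _, hd⟩ ⟨_, _, hmax, ham, _⟩
    omega


noncomputable def F0 (n a : ℕ) : ℚ := if n ≤ a + 2 then 2 ^ (n:ℤ) / 4 else 0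

noncomputable def F1 (n a : ℕ) : ℚ :=
  if a + 3 = n then 2 ^ (n:ℤ) / 4 - 1
  else if n ≤ a + 2 then ((n:ℚ) - 4) * (2 ^ (n:ℤ) / 8) + 1 else 0

noncomputable def F2 (n a : ℕ) : ℚ :=
  if a + 4 = n then 2 ^ (n:ℤ) / 4 - 2
  else if a + 3 = n then ((n:ℚ) - 4) * (2 ^ (n:ℤ) / 8 - 1)
  else if n ≤ a + 2 then (((n:ℚ)-1)^2 - 3*((n:ℚ)-1) - 6) * (2 ^ (n:ℤ) / 32) + ((n:ℚ)-1)
  else 0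

lemma sumF0 (n : ℕ) (hn : 2 ≤ n) : ∀ a, a ≤ n →
    (∑ j ∈ Finset.range a, F0 n j) =
      (if a + 1 = n then 2 ^ (n:ℤ) / 4 else if a = n then 2 ^ (n:ℤ) / 2 else 0) := by
  intro a
  induction a with
  | zero =>
    intro _
    rw [Finset.sum_range_zero]
    have h1 : ¬ (0 + 1 = n) := by omega
    have h2 : ¬ (0 = n) := by omega
    rw [if_neg h1, if_neg h2]
  | succ a ih =>
    intro ha
    rw [Finset.sum_range_succ, ih (by omega), F0]
    split_ifs <;> first | ring1 | (exfalso; omega)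

lemma sumF1 (n : ℕ) (hn : 2 ≤ n) : ∀ a, a ≤ n →
    (∑ j ∈ Finset.range a, F1 n j) =
      (if a + 2 = n then 2 ^ (n:ℤ) / 4 - 1
       else if a + 1 = n then (2 ^ (n:ℤ) / 4 - 1) + (((n:ℚ) - 4) * (2 ^ (n:ℤ) / 8) + 1)
       else if a = n then (2 ^ (n:ℤ) / 4 - 1) + 2 * (((n:ℚ) - 4) * (2 ^ (n:ℤ) / 8) + 1)
       else 0) := by
  intro a
  induction a with
  | zero =>
    intro _
    rw [Finset.sum_range_zero]
    have h2 : ¬ (0 + 1 = n) := by omega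
    have h3 : ¬ (0 = n) := by omega
    by_cases h1 : 0 + 2 = n
    · rw [if_pos h1]
      have : n = 2 := by omega
      subst this
      norm_num
    · rw [if_neg h1, if_neg h2, if_neg h3]
  | succ a ih =>
    intro ha
    rw [Finset.sum_range_succ, ih (by omega), F1]
    split_ifs <;> first | ring1 | (exfalso; omega)

lemma sumF2 (n : ℕ) (hn : 2 ≤ n) : ∀ a, a ≤ n →
    (∑ j ∈ Finset.range a, F2 n j) =
      (if a + 3 = n then 2 ^ (n:ℤ) / 4 - 2
       else if a + 2 = n then (2 ^ (n:ℤ) / 4 - 2) + ((n:ℚ) - 4) * (2 ^ (n:ℤ) / 8 - 1)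
       else if a + 1 = n then (2 ^ (n:ℤ) / 4 - 2) + ((n:ℚ) - 4) * (2 ^ (n:ℤ) / 8 - 1) +
         ((((n:ℚ)-1)^2 - 3*((n:ℚ)-1) - 6) * (2 ^ (n:ℤ) / 32) + ((n:ℚ)-1))
       else if a = n then (2 ^ (n:ℤ) / 4 - 2) + ((n:ℚ) - 4) * (2 ^ (n:ℤ) / 8 - 1) +
         2 * ((((n:ℚ)-1)^2 - 3*((n:ℚ)-1) - 6) * (2 ^ (n:ℤ) / 32) + ((n:ℚ)-1))
       else 0) := by
  intro a
  induction a with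
  | zero =>
    intro _
    rw [Finset.sum_range_zero]
    have h3 : ¬ (0 + 1 = n) := by omega
    have h4 : ¬ (0 = n) := by omega
    by_cases h1 : 0 + 3 = n
    · rw [if_pos h1]
      have : n = 3 := by omega
      subst this
      norm_num
    · rw [if_neg h1]
      by_cases h2 : 0 + 2 = n
      · rw [if_pos h2]
        have : n = 2 := by omega
        subst this
        norm_num
      · rw [if_neg h2, if_neg h3, if_neg h4]
  | succ a ih =>
    intro ha
    rw [Finset.sum_range_succ, ih (by omega), F2]
    split_ifs <;> first | ring1 | (exfalso; omega)



lemma A_one (k a : ℕ) : A 1 k a = if k = 0 ∧ a = 0 then 1 else 0 := by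
  have hall : ∀ π : Perm (Fin 1), occ12_3 π = 0 ∧ occ13_2 π = 0 ∧ permVal π 0 = 0 := by
    intro π
    have h1 : π = 1 := Subsingleton.elim _ _
    subst h1
    refine ⟨by decide, by decide, by decide⟩
  unfold A
  by_cases h : k = 0 ∧ a = 0
  · obtain ⟨rfl, rfl⟩ := h
    rw [if_pos ⟨rfl, rfl⟩]
    rw [Finset.filter_true_of_mem (fun π _ => hall π)]
    simp [Finset.card_univ, Fintype.card_perm]
  · rw [if_neg h, Finset.card_eq_zero, Finset.filter_eq_empty_iff]
    intro π _ hc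
    obtain ⟨h1, h2, h3⟩ := hall π
    exact h ⟨by omega, by omega⟩

set_option maxHeartbeats 4000000 in
theorem profile (m : ℕ) : ∀ a, a < m + 2 →
    ((A (m+2) 0 a : ℚ) = F0 (m+2) a ∧ (A (m+2) 1 a : ℚ) = F1 (m+2) a ∧
      (A (m+2) 2 a : ℚ) = F2 (m+2) a) := by
  induction m with
  | zero =>
    intro a ha
    interval_cases a <;>
      refine ⟨?_, ?_, ?_⟩ <;>
        rw [A_rec 0 _ _ (by omega)] <;>
          norm_num [A_one, F0, F1, F2, Finset.sum_range_succ]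
  | succ m IH =>
    intro a ha
    have hIH0 : ∀ a', a' < m + 2 → (A (m+2) 0 a' : ℚ) = F0 (m+2) a' :=
      fun a' h => (IH a' h).1
    have hIH1 : ∀ a', a' < m + 2 → (A (m+2) 1 a' : ℚ) = F1 (m+2) a' :=
      fun a' h => (IH a' h).2.1
    have hIH2 : ∀ a', a' < m + 2 → (A (m+2) 2 a' : ℚ) = F2 (m+2) a' :=
      fun a' h => (IH a' h).2.2
    have e3 : ((m+3 : ℕ):ℤ) = ((m+2 : ℕ):ℤ) + 1 := by push_cast; ring
    have hmm : m + 1 + 2 = m + 3 := by omega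
    rw [hmm]
    have h2ne : (2:ℚ) ≠ 0 := two_ne_zero
    refine ⟨?_, ?_, ?_⟩
    · -- k = 0
      rw [show A (m+3) 0 a = _ from hmm ▸ A_rec (m+1) 0 a (by omega)]
      by_cases hc : a ≤ m + 1 ∧ m + 1 - a ≤ 0
      · have ha' : a = m + 1 := by omega
        rw [if_pos hc]
        have hk' : 0 - (m + 1 - a) = 0 := by omega
        rw [hk']
        push_cast
        rw [hIH0 (m+1) (by omega),
          Finset.sum_congr rfl (fun a' ha' => hIH0 a' (by
            have := Finset.mem_range.mp ha'; omega)),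
          sumF0 (m+2) (by omega) a (by omega)]
        simp only [F0]
        split_ifs <;>
          first
            | (exfalso; omega)
            | (push_cast [e3]; rw [zpow_add_one₀ h2ne]; ring1)
            | (push_cast [e3]; ring1)
      · rw [if_neg hc]
        push_cast
        rw [Finset.sum_congr rfl (fun a' ha' => hIH0 a' (by
            have := Finset.mem_range.mp ha'; omega)),
          sumF0 (m+2) (by omega) a (by omega)]
        simp only [F0]
        split_ifs <;>
          first
            | (exfalso; omega)
            | (push_cast [e3]; rw [zpow_add_one₀ h2ne]; ring1)
            | (push_cast [e3]; ring1)
    · -- k = 1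
      rw [show A (m+3) 1 a = _ from hmm ▸ A_rec (m+1) 1 a (by omega)]
      by_cases hc : a ≤ m + 1 ∧ m + 1 - a ≤ 1
      · rw [if_pos hc]
        have hsub : m + 1 - a = 0 ∨ m + 1 - a = 1 := by omega
        rcases hsub with hs | hs
        · rw [hs]
          push_cast
          rw [hIH1 (m+1) (by omega),
            Finset.sum_congr rfl (fun a' ha' => hIH1 a' (by
              have := Finset.mem_range.mp ha'; omega)),
            sumF1 (m+2) (by omega) a (by omega)]
          simp only [F0, F1]
          split_ifs <;>
            first
              | (exfalso; omega)
              | (push_cast [e3]; rw [zpow_add_one₀ h2ne]; ring1)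
              | (push_cast [e3]; ring1)
        · rw [hs]
          push_cast
          rw [hIH0 (m+1) (by omega),
            Finset.sum_congr rfl (fun a' ha' => hIH1 a' (by
              have := Finset.mem_range.mp ha'; omega)),
            sumF1 (m+2) (by omega) a (by omega)]
          simp only [F0, F1]
          split_ifs <;>
            first
              | (exfalso; omega)
              | (push_cast [e3]; rw [zpow_add_one₀ h2ne]; ring1)
              | (push_cast [e3]; ring1)
      · rw [if_neg hc]
        push_cast
        rw [Finset.sum_congr rfl (fun a' ha' => hIH1 a' (by
            have := Finset.mem_range.mp ha'; omega)),
          sumF1 (m+2) (by omega) a (by omega)]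
        simp only [F0, F1]
        split_ifs <;>
          first
            | (exfalso; omega)
            | (push_cast [e3]; rw [zpow_add_one₀ h2ne]; ring1)
            | (push_cast [e3]; ring1)
    · -- k = 2
      rw [show A (m+3) 2 a = _ from hmm ▸ A_rec (m+1) 2 a (by omega)]
      by_cases hc : a ≤ m + 1 ∧ m + 1 - a ≤ 2
      · rw [if_pos hc]
        have hsub : m + 1 - a = 0 ∨ m + 1 - a = 1 ∨ m + 1 - a = 2 := by omega
        rcases hsub with hs | hs | hs
        · rw [hs]
          push_cast
          rw [hIH2 (m+1) (by omega),
            Finset.sum_congr rfl (fun a' ha' => hIH2 a' (by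
              have := Finset.mem_range.mp ha'; omega)),
            sumF2 (m+2) (by omega) a (by omega)]
          simp only [F0, F1, F2]
          split_ifs <;>
            first
              | (exfalso; omega)
              | (push_cast [e3]; rw [zpow_add_one₀ h2ne]; ring1)
              | (push_cast [e3]; ring1)
        · rw [hs]
          push_cast
          rw [hIH1 (m+1) (by omega),
            Finset.sum_congr rfl (fun a' ha' => hIH2 a' (by
              have := Finset.mem_range.mp ha'; omega)),
            sumF2 (m+2) (by omega) a (by omega)]
          simp only [F0, F1, F2]
          split_ifs <;>
            first
              | (exfalso; omega)
              | (push_cast [e3]; rw [zpow_add_one₀ h2ne]; ring1)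
              | (push_cast [e3]; ring1)
        · rw [hs]
          push_cast
          rw [hIH0 (m+1) (by omega),
            Finset.sum_congr rfl (fun a' ha' => hIH2 a' (by
              have := Finset.mem_range.mp ha'; omega)),
            sumF2 (m+2) (by omega) a (by omega)]
          simp only [F0, F1, F2]
          split_ifs <;>
            first
              | (exfalso; omega)
              | (push_cast [e3]; rw [zpow_add_one₀ h2ne]; ring1)
              | (push_cast [e3]; ring1)
      · rw [if_neg hc]
        push_cast
        rw [Finset.sum_congr rfl (fun a' ha' => hIH2 a' (by
            have := Finset.mem_range.mp ha'; omega)),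
          sumF2 (m+2) (by omega) a (by omega)]
        simp only [F0, F1, F2]
        split_ifs <;>
          first
            | (exfalso; omega)
            | (push_cast [e3]; rw [zpow_add_one₀ h2ne]; ring1)
            | (push_cast [e3]; ring1)


lemma card_fiber (m : ℕ) :
    (Finset.univ.filter (fun π : Perm (Fin (m+1)) =>
      occ12_3 π = 0 ∧ occ13_2 π = 2)).card = ∑ a ∈ Finset.range (m+1), A (m+1) 2 a := by
  classical
  rw [Finset.card_eq_sum_card_fiberwise (f := fun π => permVal π 0) (t := Finset.range (m+1))
    (fun π _ => by
      rw [Finset.mem_coe, Finset.mem_range]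
      show permVal π 0 < m + 1
      rw [permVal_lt π (Nat.succ_pos m)]
      exact (π ⟨0, Nat.succ_pos m⟩).isLt)]
  apply Finset.sum_congr rfl
  intro a _
  unfold A
  rw [Finset.filter_filter]
  congr 1
  apply Finset.filter_congr
  intro π _
  constructor
  · rintro ⟨⟨h1, h2⟩, h3⟩; exact ⟨h1, h2, h3⟩
  · rintro ⟨h1, h2, h3⟩; exact ⟨⟨h1, h2⟩, h3⟩

end Stmt2Aux

theorem stmt2 (n : ℕ) (hn : 1 ≤ n) :
    ((Finset.univ.filter (fun π : Equiv.Perm (Fin n) =>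
      occ12_3 π = 0 ∧ occ13_2 π = 2)).card : ℚ) =
      ((n : ℚ) ^ 2 - 3 * (n : ℚ) - 6) * (2 : ℚ) ^ ((n : ℤ) - 4) + (n : ℚ) := by
  classical
  obtain ⟨m, rfl⟩ : ∃ m, n = m + 1 := ⟨n - 1, by omega⟩
  rw [Stmt2Aux.card_fiber m]
  have hrec := Stmt2Aux.A_rec m 2 (m+1) (by omega)
  rw [if_neg (by omega), add_zero] at hrec
  rw [← hrec]
  have hprof := (Stmt2Aux.profile m (m+1) (by omega)).2.2
  rw [hprof]
  simp only [Stmt2Aux.F2]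
  rw [if_neg (by omega), if_neg (by omega), if_pos (by omega)]
  have e5 : ((m+2 : ℕ):ℤ) = (((m+1 : ℕ):ℤ) - 4) + 5 := by push_cast; ring
  rw [e5, zpow_add₀ (two_ne_zero : (2:ℚ) ≠ 0)]
  push_cast
  have h32 : (2:ℚ) ^ (5:ℤ) = 32 := by norm_num
  ring1
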